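/- Let μ be a probability distribution supported on a bounded interval Y ⊂ ℝ₊, and suppose μ is not supported on any lattice {nc : n ∈ ℤ} for any real c. Then for every bounded interval I ⊂ ℝ₊ and every ε > 0, there exist N and intervals J_1, …, J_N each of positive μ-measure, such that for all (θ_1, …, θ_N) ∈ J_1 × ⋯ × J_N, the length of f_{θ_N}∘⋯∘f_{θ_1}(I) is less than ε. -/

import Mathlib

open MeasureTheory
open scoped ENNReal
namespace S6

def fL (W : List ℝ) (x : ℝ) : ℝ := W.foldl (fun z t => |t - z|) x
lemma fL_nil (x : ℝ) : fL [] x = x := rfl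
lemma fL_cons (w : ℝ) (W : List ℝ) (x : ℝ) : fL (w :: W) x = fL W (|w - x|) := rfl
lemma fL_append (V W : List ℝ) (x : ℝ) : fL (V ++ W) x = fL W (fL V x) :=
  List.foldl_append
def inc (μ : Measure ℝ) : Set ℝ :=
  {p | ∀ δ : ℝ, 0 < δ → 0 < μ (Set.Ioo (p - δ) (p + δ))}
def Rl (μ : Measure ℝ) (c D : ℝ) (W : List ℝ) : Prop :=
  0 ≤ c ∧ (∀ w ∈ W, w ∈ inc μ) ∧ ∀ x : ℝ, 0 ≤ x → x ≤ D → fL W x = |c - x|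

lemma Rl_single {μ : Measure ℝ} {c : ℝ} (hc : c ∈ inc μ) (h0 : 0 ≤ c) (D : ℝ) :
    Rl μ c D [c] :=
  ⟨h0, by simpa using hc, fun x _ _ => rfl⟩

lemma Rl_sub {μ : Measure ℝ} {a b Da Db : ℝ} {Wa Wb : List ℝ} (ha : Rl μ a Da Wa)
    (hb : Rl μ b Db Wb) (hab : a ≤ b) (hbDa : b ≤ Da) :
    Rl μ (b - a) (min Db b) (Wb ++ Wa) := by
  obtain ⟨ha0, haT, haE⟩ := ha
  obtain ⟨hb0, hbT, hbE⟩ := hb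
  refine ⟨by linarith, ?_, ?_⟩
  · intro w hw
    rcases List.mem_append.1 hw with h | h
    exacts [hbT w h, haT w h]
  · intro x hx0 hxD
    have hxb : x ≤ b := le_trans hxD (min_le_right _ _)
    have hxDb : x ≤ Db := le_trans hxD (min_le_left _ _)
    rw [fL_append, hbE x hx0 hxDb]
    have h1 : |b - x| = b - x := abs_of_nonneg (by linarith)
    rw [h1, haE _ (by linarith) (by linarith)]
    have h2 : a - (b - x) = -((b - a) - x) := by ring
    rw [h2, abs_neg]


-- helper archimedean
lemma arch {s : ℝ} (hs : 0 < s) (r : ℝ) : ∃ n : ℕ, r ≤ s * (n + 1) := by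
  obtain ⟨n, hn⟩ := exists_nat_ge (r / s)
  refine ⟨n, ?_⟩
  have : r / s ≤ (n : ℝ) + 1 := by linarith
  calc r = s * (r / s) := by field_simp
  _ ≤ s * ((n : ℝ) + 1) := by
        exact mul_le_mul_of_nonneg_left this hs.le

lemma Rl_red {μ : Measure ℝ} {s D : ℝ} {Ws : List ℝ} (h : Rl μ s D Ws) (hs : 0 < s) :
    ∀ n : ℕ, ∀ M : ℝ, M ≤ D → M ≤ s * (n + 1) →
      ∃ W : List ℝ, (∀ w ∈ W, w ∈ inc μ) ∧
        ∀ x, x ∈ Set.Icc (0:ℝ) M → fL W x ∈ Set.Icc (0:ℝ) s := by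
  intro n
  induction n with
  | zero =>
    intro M hMD hMs
    refine ⟨[], by simp, fun x hx => ⟨hx.1, ?_⟩⟩
    rw [fL_nil]
    have : M ≤ s := by push_cast at hMs; linarith
    exact hx.2.trans this
  | succ n ih =>
    intro M hMD hMs
    by_cases hM : M ≤ s
    · exact ⟨[], by simp, fun x hx => ⟨hx.1, by rw [fL_nil]; exact hx.2.trans hM⟩⟩
    · push_neg at hM
      have hM' : max s (M - s) ≤ D := by
        rcases max_cases s (M - s) with ⟨he, _⟩ | ⟨he, _⟩ <;> rw [he] <;> linarith
      have hM'' : max s (M - s) ≤ s * (n + 1) := by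
        push_cast at hMs ⊢
        rcases max_cases s (M - s) with ⟨he, _⟩ | ⟨he, _⟩ <;> rw [he] <;> nlinarith
      obtain ⟨W, hWT, hW⟩ := ih (max s (M - s)) hM' hM''
      refine ⟨Ws ++ W, ?_, ?_⟩
      · intro w hw
        rcases List.mem_append.1 hw with h' | h'
        exacts [h.2.1 w h', hWT w h']
      · intro x hx
        rw [fL_append, h.2.2 x hx.1 (hx.2.trans hMD)]
        apply hW
        constructor
        · positivity
        · rcases abs_cases (s - x) with ⟨he, _⟩ | ⟨he, _⟩ <;> rw [he]
          · exact le_max_of_le_left (by linarith [hx.1])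
          · exact le_max_of_le_right (by linarith [hx.2])

lemma Rl_SUB {μ : Measure ℝ} {s Ds : ℝ} {Ws : List ℝ} (hs : 0 < s) (hRs : Rl μ s Ds Ws) :
    ∀ n : ℕ, ∀ b Db (Wb : List ℝ), Rl μ b Db Wb → s < b → b ≤ Ds → b ≤ Db →
      b ≤ s * (n + 2) → (∀ k : ℤ, b ≠ k * s) →
      ∃ (s' D' : ℝ) (W' : List ℝ) (k : ℤ), Rl μ s' D' W' ∧ 0 < s' ∧ s' < s ∧ s' + s ≤ D' ∧
        s' = b - k * s ∧ s' ≤ b - s := by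
  intro n
  induction n with
  | zero =>
    intro b Db Wb hRb hsb hbDs hbDb hbn hnk
    have hsub := Rl_sub hRs hRb hsb.le hbDs
    have hlt : b - s < s := by
      rcases lt_trichotomy (b - s) s with h | h | h
      · exact h
      · exact absurd (by push_cast; linarith : b = (2:ℤ) * s) (hnk 2)
      · push_cast at hbn; linarith
    refine ⟨b - s, min Db b, Wb ++ Ws, 1, hsub, by linarith, hlt, ?_, by push_cast; ring, le_refl _⟩
    have : b - s + s = b := by ring
    rw [this, le_min_iff]
    exact ⟨hbDb, le_refl b⟩
  | succ n ih =>
    intro b Db Wb hRb hsb hbDs hbDb hbn hnk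
    have hsub := Rl_sub hRs hRb hsb.le hbDs
    rcases lt_trichotomy (b - s) s with h | h | h
    · have hpos : 0 < b - s := by linarith
      refine ⟨b - s, min Db b, Wb ++ Ws, 1, hsub, hpos, h, ?_, by push_cast; ring, le_refl _⟩
      have : b - s + s = b := by ring
      rw [this, le_min_iff]
      exact ⟨hbDb, le_refl b⟩
    · exact absurd (by push_cast; linarith : b = (2:ℤ) * s) (hnk 2)
    · have hnk' : ∀ k : ℤ, b - s ≠ k * s := by
        intro k hk
        exact hnk (k + 1) (by push_cast; linarith)
      have hble : b - s ≤ s * (n + 2) := by push_cast at hbn ⊢; linarith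
      obtain ⟨s', D', W', k, hRl', h0', hlt', hD', hkeq, hle'⟩ :=
        ih (b - s) (min Db b) (Wb ++ Ws) hsub h (by linarith) (by
          rw [le_min_iff]; exact ⟨by linarith, by linarith⟩) hble hnk'
      exact ⟨s', D', W', k + 1, hRl', h0', hlt', hD', by push_cast; linarith, by linarith⟩


def irrP (p q : ℝ) : Prop := ∀ m n : ℤ, m * p + n * q = 0 → m = 0 ∧ n = 0

lemma irrP_step {s r s' : ℝ} (h : irrP s r) (k : ℤ) (hk : s' = r - k * s) :
    irrP s' s := by
  intro m n hmn
  have h2 : ((n - m * k : ℤ) : ℝ) * s + ((m : ℤ) : ℝ) * r = 0 := by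
    rw [hk] at hmn
    push_cast at hmn ⊢
    nlinarith [hmn]
  obtain ⟨h3, h4⟩ := h (n - m * k) m h2
  refine ⟨h4, ?_⟩
  rw [h4] at h3
  simpa using h3

lemma irrP_ne {s r : ℝ} (h : irrP s r) (k : ℤ) : r ≠ k * s := by
  intro hk
  have : (k : ℤ) * s + (-1 : ℤ) * r = 0 := by push_cast; rw [hk]; ring
  obtain ⟨_, h2⟩ := h k (-1) this
  exact absurd h2 (by norm_num)

lemma Rl_desc {μ : Measure ℝ} (δ : ℝ) (hδ : 0 < δ) :
    ∀ n : ℕ, ∀ (s r Ds Dr : ℝ) (Ws Wr : List ℝ), 0 < s → s < r →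
      Rl μ s Ds Ws → r ≤ Ds → Rl μ r Dr Wr → r ≤ Dr → irrP s r → s < δ * 2 ^ n →
      ∃ (W : List ℝ) (t : ℝ), (∀ w ∈ W, w ∈ inc μ) ∧ 0 ≤ t ∧ t < δ ∧
        ∀ x, x ∈ Set.Icc (0:ℝ) r → fL W x ∈ Set.Icc (0:ℝ) t := by
  intro n
  induction n with
  | zero =>
    intro s r Ds Dr Ws Wr hs hsr hRs hrDs hRr hrDr hirr hsn
    have hsδ : s < δ := by simpa using hsn
    obtain ⟨m, hm⟩ := arch hs r
    obtain ⟨W, hWT, hW⟩ := Rl_red hRs hs m r hrDs hm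
    exact ⟨W, s, hWT, hs.le, hsδ, hW⟩
  | succ n ih =>
    intro s r Ds Dr Ws Wr hs hsr hRs hrDs hRr hrDr hirr hsn
    by_cases hsδ : s < δ
    · obtain ⟨m, hm⟩ := arch hs r
      obtain ⟨W, hWT, hW⟩ := Rl_red hRs hs m r hrDs hm
      exact ⟨W, s, hWT, hs.le, hsδ, hW⟩
    · push_neg at hsδ
      -- first Euclid step
      obtain ⟨m1, hm1⟩ := arch hs r
      obtain ⟨s₁, D₁, W₁, k₁, hR1, h01, hlt1, hD1, hk1, hle1⟩ :=
        Rl_SUB hs hRs m1 r Dr Wr hRr hsr hrDs hrDr (by push_cast at hm1 ⊢; linarith)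
          (fun k => irrP_ne hirr k)
      have hirr1 : irrP s₁ s := irrP_step hirr k₁ hk1
      -- second Euclid step
      obtain ⟨m2, hm2⟩ := arch h01 s
      obtain ⟨s₂, D₂, W₂, k₂, hR2, h02, hlt2, hD2, hk2, hle2⟩ :=
        Rl_SUB h01 hR1 m2 s Ds Ws hRs hlt1 (by linarith) (by linarith)
          (by push_cast at hm2 ⊢; linarith) (fun k => irrP_ne hirr1 k)
      have hirr2 : irrP s₂ s₁ := irrP_step hirr1 k₂ hk2
      have hs2 : s₂ < δ * 2 ^ n := by
        have h2s : 2 * s₂ < s := by linarith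
        have hp : (2:ℝ) ^ (n + 1) = 2 * 2 ^ n := by ring
        rw [hp] at hsn
        linarith
      obtain ⟨W₃, t, hWT3, ht0, htδ, hW3⟩ :=
        ih s₂ s₁ D₂ D₁ W₂ W₁ h02 hlt2 hR2 (by linarith) hR1 (by linarith) hirr2 hs2
      -- compose the box reductions [0,r] → [0,s] → [0,s₁] → [0,t]
      obtain ⟨Wa, hWTa, hWa⟩ := Rl_red hRs hs m1 r hrDs hm1
      obtain ⟨m3, hm3⟩ := arch h01 s
      obtain ⟨Wb, hWTb, hWb⟩ := Rl_red hR1 h01 m3 s (by linarith) hm3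
      refine ⟨Wa ++ Wb ++ W₃, t, ?_, ht0, htδ, ?_⟩
      · intro w hw
        rcases List.mem_append.1 hw with h' | h'
        · rcases List.mem_append.1 h' with h'' | h''
          exacts [hWTa w h'', hWTb w h'']
        · exact hWT3 w h'
      · intro x hx
        rw [fL_append, fL_append]
        exact hW3 _ (hWb _ (hWa _ hx))


lemma null_compl_inc (μ : Measure ℝ) : μ (inc μ)ᶜ = 0 := by
  classical
  set s : ℚ × ℚ → Set ℝ := fun r =>
    if μ (Set.Ioo (r.1 : ℝ) r.2) = 0 then Set.Ioo (r.1 : ℝ) r.2 else ∅ with hs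
  have hnull : μ (⋃ r, s r) = 0 := by
    apply measure_iUnion_null
    intro r
    by_cases h : μ (Set.Ioo (r.1 : ℝ) r.2) = 0 <;> simp [hs, h]
  refine measure_mono_null ?_ hnull
  intro p hp
  simp only [Set.mem_compl_iff, inc, Set.mem_setOf_eq] at hp
  push_neg at hp
  obtain ⟨δ, hδ, hμ⟩ := hp
  rw [le_zero_iff] at hμ
  obtain ⟨r1, hr1, hr1'⟩ := exists_rat_btwn (show p - δ < p by linarith)
  obtain ⟨r2, hr2, hr2'⟩ := exists_rat_btwn (show p < p + δ by linarith)
  refine Set.mem_iUnion.2 ⟨(r1, r2), ?_⟩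
  have hnull2 : μ (Set.Ioo (r1 : ℝ) r2) = 0 :=
    measure_mono_null (Set.Ioo_subset_Ioo hr1.le hr2'.le) hμ
  simp [hs, hnull2, Set.mem_Ioo, hr1', hr2]

lemma measure_one_of_superset {μ : Measure ℝ} [IsProbabilityMeasure μ] {S : Set ℝ}
    (hTS : inc μ ⊆ S) : μ S = 1 := by
  refine le_antisymm prob_le_one ?_
  have h1 : (1 : ℝ≥0∞) = μ Set.univ := measure_univ.symm
  have h2 : μ Set.univ ≤ μ ((inc μ)ᶜ ∪ S) := by
    apply measure_mono
    intro x _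
    by_cases h : x ∈ inc μ
    exacts [Or.inr (hTS h), Or.inl h]
  have h3 := h2.trans (measure_union_le _ _)
  rw [null_compl_inc, zero_add] at h3
  rw [h1]
  exact h3

lemma compl_Icc_null {μ : Measure ℝ} [IsProbabilityMeasure μ] {b : ℝ}
    (hsupp : μ (Set.Icc 0 b) = 1) : μ (Set.Icc (0:ℝ) b)ᶜ = 0 := by
  rw [measure_compl measurableSet_Icc (measure_ne_top μ _), hsupp, measure_univ, tsub_self]

lemma inc_subset {μ : Measure ℝ} [IsProbabilityMeasure μ] {b : ℝ}
    (hsupp : μ (Set.Icc 0 b) = 1) : inc μ ⊆ Set.Icc 0 b := by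
  intro p hp
  by_contra hpI
  simp only [Set.mem_Icc, not_and_or, not_le] at hpI
  have hc := compl_Icc_null (μ := μ) hsupp
  rcases hpI with h | h
  · have h2 := hp (-p) (by linarith)
    have h3 : Set.Ioo (p - -p) (p + -p) ⊆ (Set.Icc (0:ℝ) b)ᶜ := by
      intro x hx
      simp only [Set.mem_Ioo] at hx
      simp only [Set.mem_compl_iff, Set.mem_Icc, not_and_or, not_le]
      left; linarith [hx.2]
    have := measure_mono_null h3 hc
    rw [this] at h2
    exact lt_irrefl 0 h2
  · have h2 := hp (p - b) (by linarith)
    have h3 : Set.Ioo (p - (p - b)) (p + (p - b)) ⊆ (Set.Icc (0:ℝ) b)ᶜ := by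
      intro x hx
      simp only [Set.mem_Ioo] at hx
      simp only [Set.mem_compl_iff, Set.mem_Icc, not_and_or, not_le]
      right; linarith [hx.1]
    have := measure_mono_null h3 hc
    rw [this] at h2
    exact lt_irrefl 0 h2

lemma inc_finite_of_sep {μ : Measure ℝ} [IsProbabilityMeasure μ] {b δ : ℝ} (hδ : 0 < δ)
    (hsupp : μ (Set.Icc 0 b) = 1)
    (h1 : ¬ ∃ p ∈ inc μ, ∃ q ∈ inc μ, p < q ∧ q - p < δ) : (inc μ).Finite := by
  have hsub := inc_subset (μ := μ) hsupp
  have hinj : Set.InjOn (fun x => ⌊x / δ⌋) (inc μ) := by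
    intro p hp q hq h
    by_contra hne
    simp only at h
    have key : ∀ u v : ℝ, u ∈ inc μ → v ∈ inc μ → u < v → ⌊u / δ⌋ = ⌊v / δ⌋ → False := by
      intro u v hu hv huv hfl
      apply h1
      refine ⟨u, hu, v, hv, huv, ?_⟩
      have ha := Int.lt_floor_add_one (v / δ)
      have hb := Int.floor_le (u / δ)
      rw [← hfl] at ha
      have h5 : (v - u) / δ < 1 := by rw [sub_div]; linarith
      linarith [(div_lt_one hδ).1 h5]
    rcases lt_or_gt_of_ne hne with hlt | hlt
    · exact key p q hp hq hlt h
    · exact key q p hq hp hlt h.symm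
  have himg : ((fun x => ⌊x / δ⌋) '' inc μ).Finite := by
    apply Set.Finite.subset (Set.finite_Icc (⌊(0:ℝ) / δ⌋) (⌊b / δ⌋))
    rintro _ ⟨x, hx, rfl⟩
    have hx' := hsub hx
    constructor <;> apply Int.floor_le_floor <;> gcongr
    exacts [hx'.1, hx'.2]
  exact Set.Finite.of_finite_image himg hinj


lemma lattice_of_no_irr {μ : Measure ℝ} [IsProbabilityMeasure μ] {b : ℝ}
    (hsupp : μ (Set.Icc 0 b) = 1) (hfin : (inc μ).Finite)
    (h2 : ¬ ∃ p ∈ inc μ, ∃ q ∈ inc μ, 0 < p ∧ p < q ∧ irrP p q) :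
    ∃ c : ℝ, inc μ ⊆ {x | ∃ n : ℤ, x = n * c} := by
  classical
  by_cases hzero : ∀ x ∈ inc μ, x = 0
  · exact ⟨0, fun y hy => ⟨0, by simp [hzero y hy]⟩⟩
  · push_neg at hzero
    obtain ⟨x₀, hx₀T, hx₀⟩ := hzero
    have hx₀pos : 0 < x₀ := lt_of_le_of_ne (inc_subset hsupp hx₀T).1 (Ne.symm hx₀)
    push_neg at h2
    have key : ∀ y ∈ inc μ, ∃ ρ : ℚ, y = (ρ : ℝ) * x₀ := by
      intro y hy
      rcases eq_or_ne y 0 with hy0 | hy0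
      · exact ⟨0, by simp [hy0]⟩
      have hypos : 0 < y := lt_of_le_of_ne (inc_subset hsupp hy).1 (Ne.symm hy0)
      rcases lt_trichotomy y x₀ with hlt | heq | hlt
      · have hni := h2 y hy x₀ hx₀T hypos hlt
        simp only [irrP] at hni
        push_neg at hni
        obtain ⟨m, n, hmn0, hne⟩ := hni
        have hm : m ≠ 0 := by
          intro hm0
          rw [hm0] at hmn0
          push_cast at hmn0
          have hnr : (n : ℝ) = 0 := by
            rcases mul_eq_zero.1 (by linarith : (n : ℝ) * x₀ = 0) with h | h
            · exact h
            · exact absurd h (by linarith)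
          have hn0 : n = 0 := by exact_mod_cast hnr
          exact hne hm0 hn0
        refine ⟨(-n : ℚ) / (m : ℚ), ?_⟩
        have hmr : (m : ℝ) ≠ 0 := Int.cast_ne_zero.2 hm
        push_cast
        field_simp
        linarith
      · exact ⟨1, by simp [heq]⟩
      · have hni := h2 x₀ hx₀T y hy hx₀pos hlt
        simp only [irrP] at hni
        push_neg at hni
        obtain ⟨m, n, hmn0, hne⟩ := hni
        have hn : n ≠ 0 := by
          intro hn0
          rw [hn0] at hmn0
          push_cast at hmn0
          have hmz : (m : ℝ) = 0 := by
            rcases mul_eq_zero.1 (by linarith : (m : ℝ) * x₀ = 0) with h | h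
            · exact h
            · exact absurd h (by linarith)
          have hm0 : m = 0 := by exact_mod_cast hmz
          exact hne hm0 hn0
        refine ⟨(-m : ℚ) / (n : ℚ), ?_⟩
        have hnr : (n : ℝ) ≠ 0 := Int.cast_ne_zero.2 hn
        push_cast
        field_simp
        linarith
    -- common denominator
    set g : ℝ → ℚ := fun y => if h : ∃ ρ : ℚ, y = (ρ : ℝ) * x₀ then h.choose else 0 with hgdef
    have hg : ∀ y ∈ inc μ, y = ((g y : ℚ) : ℝ) * x₀ := by
      intro y hy
      have h := key y hy
      simp only [hgdef, dif_pos h]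
      exact h.choose_spec
    set D : ℕ := hfin.toFinset.prod (fun y => (g y).den) with hDdef
    have hD : D ≠ 0 := by
      rw [hDdef]
      rw [Finset.prod_ne_zero_iff]
      intro y _
      exact (g y).den_nz
    refine ⟨x₀ / D, ?_⟩
    intro y hy
    obtain ⟨ρ, hρdef⟩ : ∃ ρ : ℚ, ρ = g y := ⟨g y, rfl⟩
    have hden : ρ.den ∣ D := by
      rw [hDdef, hρdef]
      exact Finset.dvd_prod_of_mem _ (hfin.mem_toFinset.2 hy)
    obtain ⟨k, hk⟩ := hden
    have hkne : (k : ℝ) ≠ 0 := by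
      intro h
      have : k = 0 := by exact_mod_cast h
      rw [this, Nat.mul_zero] at hk
      exact hD hk
    have hdne : (ρ.den : ℝ) ≠ 0 := Nat.cast_ne_zero.2 ρ.den_nz
    have hy' : y = (ρ : ℝ) * x₀ := by rw [hρdef]; exact hg y hy
    refine ⟨ρ.num * (k : ℤ), ?_⟩
    have hDr : (D : ℝ) = (ρ.den : ℝ) * (k : ℝ) := by exact_mod_cast congrArg (fun n : ℕ => (n : ℝ)) hk
    rw [hy', Rat.cast_def, hDr]
    push_cast
    field_simp


lemma DICH (μ : Measure ℝ) [IsProbabilityMeasure μ] {b : ℝ}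
    (hsupp : μ (Set.Icc 0 b) = 1)
    (hlat : ¬ ∃ c : ℝ, μ {x | ∃ n : ℤ, x = n * c} = 1) (δ : ℝ) (hδ : 0 < δ) :
    (∃ p ∈ inc μ, ∃ q ∈ inc μ, p < q ∧ q - p < δ) ∨
    (∃ p ∈ inc μ, ∃ q ∈ inc μ, 0 < p ∧ p < q ∧ irrP p q) := by
  by_contra h
  push_neg at h
  obtain ⟨h1, h2⟩ := h
  have h1' : ¬ ∃ p ∈ inc μ, ∃ q ∈ inc μ, p < q ∧ q - p < δ := by
    intro ⟨p, hp, q, hq, hpq, hd⟩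
    exact absurd hd (by have := h1 p hp q hq hpq; linarith)
  have hfin := inc_finite_of_sep hδ hsupp h1'
  have h2' : ¬ ∃ p ∈ inc μ, ∃ q ∈ inc μ, 0 < p ∧ p < q ∧ irrP p q := by
    intro ⟨p, hp, q, hq, hp0, hpq, hirr⟩
    exact h2 p hp q hq hp0 hpq hirr
  obtain ⟨c, hc⟩ := lattice_of_no_irr hsupp hfin h2'
  exact hlat ⟨c, measure_one_of_superset hc⟩

lemma NOM (μ : Measure ℝ) [IsProbabilityMeasure μ] {b : ℝ}
    (hsupp : μ (Set.Icc 0 b) = 1)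
    (hlat : ¬ ∃ c : ℝ, μ {x | ∃ n : ℤ, x = n * c} = 1)
    (M₀ : ℝ) (δ : ℝ) (hδ : 0 < δ) :
    ∃ (W : List ℝ) (t : ℝ), (∀ w ∈ W, w ∈ inc μ) ∧ 0 ≤ t ∧ t < δ ∧
      ∀ x, x ∈ Set.Icc (0:ℝ) M₀ → fL W x ∈ Set.Icc (0:ℝ) t := by
  rcases DICH μ hsupp hlat δ hδ with ⟨p, hp, q, hq, hpq, hclose⟩ | ⟨p, hp, q, hq, hp0, hpq, hirr⟩
  · -- close pair case
    have hp0 : 0 ≤ p := (inc_subset hsupp hp).1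
    have hq0 : 0 < q := lt_of_le_of_lt hp0 hpq
    have hRq : Rl μ q (max M₀ q) [q] := Rl_single hq hq0.le _
    have hRqq : Rl μ q q [q] := Rl_single hq hq0.le _
    have hRp : Rl μ p q [p] := Rl_single hp hp0 _
    have hRd : Rl μ (q - p) (min (max M₀ q) q) ([q] ++ [p]) := Rl_sub hRp hRq hpq.le (le_refl q)
    have hmin : min (max M₀ q) q = q := min_eq_right (le_max_right _ _)
    rw [hmin] at hRd
    obtain ⟨m1, hm1⟩ := arch hq0 M₀
    obtain ⟨W₁, hWT1, hW1⟩ := Rl_red hRq hq0 m1 M₀ (le_max_left _ _) hm1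
    obtain ⟨m2, hm2⟩ := arch (by linarith : (0:ℝ) < q - p) q
    obtain ⟨W₂, hWT2, hW2⟩ := Rl_red hRd (by linarith) m2 q (le_refl q) hm2
    refine ⟨W₁ ++ W₂, q - p, ?_, by linarith, hclose, ?_⟩
    · intro w hw
      rcases List.mem_append.1 hw with h' | h'
      exacts [hWT1 w h', hWT2 w h']
    · intro x hx
      rw [fL_append]
      exact hW2 _ (hW1 _ hx)
  · -- irrational pair case
    have hq0 : 0 < q := lt_trans hp0 hpq
    have hRq : Rl μ q (max M₀ q) [q] := Rl_single hq hq0.le _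
    have hRqq : Rl μ q q [q] := Rl_single hq hq0.le _
    have hRp : Rl μ p q [p] := Rl_single hp hp0.le _
    obtain ⟨n, hn⟩ := arch hδ p
    have hn' : p < δ * 2 ^ (n + 1) := by
      have h2n : ((n : ℝ) + 1) < 2 ^ (n + 1) := by
        have := Nat.lt_two_pow_self (n := n + 1)
        push_cast at this ⊢
        exact_mod_cast this
      nlinarith
    obtain ⟨W₂, t, hWT2, ht0, htδ, hW2⟩ :=
      Rl_desc δ hδ (n + 1) p q q q [p] [q] hp0 hpq hRp (le_refl q) hRqq (le_refl q) hirr hn'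
    obtain ⟨m1, hm1⟩ := arch hq0 M₀
    obtain ⟨W₁, hWT1, hW1⟩ := Rl_red hRq hq0 m1 M₀ (le_max_left _ _) hm1
    refine ⟨W₁ ++ W₂, t, ?_, ht0, htδ, ?_⟩
    · intro w hw
      rcases List.mem_append.1 hw with h' | h'
      exacts [hWT1 w h', hWT2 w h']
    · intro x hx
      rw [fL_append]
      exact hW2 _ (hW1 _ hx)


lemma fL_close {η : ℝ} : ∀ {V W : List ℝ}, List.Forall₂ (fun a b => |a - b| ≤ η) V W →
    ∀ x y : ℝ, |fL V x - fL W y| ≤ |x - y| + η * V.length := by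
  intro V W h
  induction h with
  | nil => intro x y; simp [fL_nil]
  | @cons a b V' W' hab h ih =>
    intro x y
    rw [fL_cons, fL_cons]
    have h2 := ih (|a - x|) (|b - y|)
    have h3 : |(|a - x|) - (|b - y|)| ≤ |a - b| + |x - y| := by
      have e1 : (a - x) - (b - y) = (a - b) - (x - y) := by ring
      calc |(|a - x|) - (|b - y|)| ≤ |(a - x) - (b - y)| := abs_abs_sub_abs_le_abs_sub _ _
      _ = |(a - b) - (x - y)| := by rw [e1]
      _ ≤ |a - b| + |x - y| := abs_sub _ _
    have h4 : ((V'.length : ℝ)) ≥ 0 := Nat.cast_nonneg _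
    have h5 : ((a :: V').length : ℝ) = (V'.length : ℝ) + 1 := by push_cast [List.length_cons]; ring
    rw [h5]
    nlinarith [hab, h2, h3]

lemma forall₂_ofFn {R : ℝ → ℝ → Prop} : ∀ {n : ℕ} (f g : Fin n → ℝ),
    (∀ i, R (f i) (g i)) → List.Forall₂ R (List.ofFn f) (List.ofFn g) := by
  intro n
  induction n with
  | zero => intro f g _; simp [List.ofFn_zero]
  | succ n ih =>
    intro f g h
    rw [List.ofFn_succ, List.ofFn_succ]
    exact List.Forall₂.cons (h 0) (ih _ _ fun i => h i.succ)

end S6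

/-- Lemma 4: if `μ` is a probability measure supported on a bounded interval in `ℝ₊`
and not supported on any lattice `{nc : n ∈ ℤ}`, then for every bounded interval
`I ⊆ ℝ₊` and every `ε > 0` there are finitely many intervals `J₁, …, J_N` of positive
`μ`-measure such that for all `(θ₁, …, θ_N) ∈ J₁ × ⋯ × J_N` the image
`f_{θ_N} ∘ ⋯ ∘ f_{θ₁} (I)` has length less than `ε`, where `f_θ(x) = |θ - x|`. -/
theorem stmt_6 (μ : Measure ℝ) [IsProbabilityMeasure μ] (b : ℝ) (hb : 0 ≤ b)
    (hsupp : μ (Set.Icc 0 b) = 1)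
    (hlat : ¬ ∃ c : ℝ, μ {x | ∃ n : ℤ, x = n * c} = 1)
    (a₁ b₁ : ℝ) (ha₁ : 0 ≤ a₁) (hab₁ : a₁ ≤ b₁) (ε : ℝ) (hε : 0 < ε) :
    ∃ (N : ℕ) (J : Fin N → Set ℝ),
      (∀ i, ∃ u v : ℝ, u < v ∧ J i = Set.Ioo u v) ∧
      (∀ i, 0 < μ (J i)) ∧
      ∀ θ : Fin N → ℝ, (∀ i, θ i ∈ J i) →
        Metric.diam
          ((fun x => (List.ofFn θ).foldl (fun z t => |t - z|) x) '' Set.Icc a₁ b₁) < ε := by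
  classical
  have hδ : 0 < ε / 4 := by linarith
  obtain ⟨W, t, hWT, ht0, htδ, hmap⟩ := S6.NOM μ hsupp hlat b₁ (ε / 4) hδ
  set N := W.length with hN
  set η := ε / (4 * ((N : ℝ) + 1)) with hη
  have hηpos : 0 < η := by positivity
  refine ⟨N, fun i => Set.Ioo (W.get i - η) (W.get i + η), ?_, ?_, ?_⟩
  · intro i
    exact ⟨W.get i - η, W.get i + η, by linarith, rfl⟩
  · intro i
    exact hWT (W.get i) (by simpa using List.get_mem W i.1 i.2) η hηpos
  · intro θ hθ
    have hF2 : List.Forall₂ (fun a b' => |a - b'| ≤ η) (List.ofFn θ) W := by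
      conv_rhs => rw [← List.ofFn_get W]
      apply S6.forall₂_ofFn
      intro i
      have h := hθ i
      simp only [Set.mem_Ioo] at h
      rw [abs_le]
      constructor <;> linarith [h.1, h.2]
    have hlen : ((List.ofFn θ).length : ℝ) = (N : ℝ) := by simp
    have hηN : η * (N : ℝ) ≤ ε / 4 := by
      have h4 : η * (4 * ((N : ℝ) + 1)) = ε := by
        rw [hη]; field_simp
      nlinarith [hηpos, Nat.cast_nonneg (α := ℝ) N]
    have key : ∀ z ∈ (fun x => (List.ofFn θ).foldl (fun z t => |t - z|) x) '' Set.Icc a₁ b₁,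
        ∀ w ∈ (fun x => (List.ofFn θ).foldl (fun z t => |t - z|) x) '' Set.Icc a₁ b₁,
        dist z w ≤ 3 * ε / 4 := by
      rintro _ ⟨x, hx, rfl⟩ _ ⟨y, hy, rfl⟩
      rw [Real.dist_eq]
      have hxm : x ∈ Set.Icc (0:ℝ) b₁ := ⟨le_trans ha₁ hx.1, hx.2⟩
      have hym : y ∈ Set.Icc (0:ℝ) b₁ := ⟨le_trans ha₁ hy.1, hy.2⟩
      have h1 := S6.fL_close hF2 x x
      have h2 := S6.fL_close hF2 y y
      rw [sub_self, abs_zero, hlen] at h1 h2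
      have h3x := hmap x hxm
      have h3y := hmap y hym
      simp only [Set.mem_Icc] at h3x h3y
      have e1 : (fun x => (List.ofFn θ).foldl (fun z t => |t - z|) x) x = S6.fL (List.ofFn θ) x := rfl
      have tri1 : |S6.fL (List.ofFn θ) x - S6.fL (List.ofFn θ) y| ≤
          |S6.fL (List.ofFn θ) x - S6.fL W x| + |S6.fL W x - S6.fL W y| +
          |S6.fL W y - S6.fL (List.ofFn θ) y| := by
        have t1 := abs_sub_le (S6.fL (List.ofFn θ) x) (S6.fL W x) (S6.fL (List.ofFn θ) y)
        have t2 := abs_sub_le (S6.fL W x) (S6.fL W y) (S6.fL (List.ofFn θ) y)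
        linarith
      have hmid : |S6.fL W x - S6.fL W y| ≤ t := by
        rw [abs_le]
        constructor <;> linarith [h3x.1, h3x.2, h3y.1, h3y.2]
      have hswap : |S6.fL W y - S6.fL (List.ofFn θ) y| = |S6.fL (List.ofFn θ) y - S6.fL W y| :=
        abs_sub_comm _ _
      show |S6.fL (List.ofFn θ) x - S6.fL (List.ofFn θ) y| ≤ 3 * ε / 4
      rw [hswap] at tri1
      linarith
    have hdle := Metric.diam_le_of_forall_dist_le (by linarith : (0:ℝ) ≤ 3 * ε / 4) key
    linarith [hdle]
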